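/- Let A be the matrix indexed by oriented k-faces (one per underlying face, for a fixed orientation O) of a finite simplicial complex restricted to a down-connected component C_k of k-faces (k ≥ 1) with at least two faces, defined by A(σ,σ') = −(1/(k+1))·s^down(σ,σ')·LP(σ)^{1/2}LP(σ')^{1/2}/LP(σ∩σ') for down-adjacent σ, σ' and A(σ,σ) = −(1/(k+1))·LP(σ)·Σ_{ρ⊂σ}LP(ρ)^{−1}, extended by 0 otherwise. Then λ_min(A) ≥ −1, with equality if and only if C_k admits a coherent orientation; in that case the eigenvalue −1 has multiplicity one with eigenvector g(σ) = (LP(σ)·RP(σ))^{1/2} (in the coherent orientation). -/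

import Mathlib

open Matrix

/-- The incidence sign `[σ : ρ]` for a codimension-1 subface `ρ ⊂ σ` of a
canonically (increasingly) ordered face. -/
def IncSgn {α : Type*} [LinearOrder α] (σ ρ : Finset α) : ℤ :=
  (-1) ^ (∑ x ∈ σ \ ρ, (σ.filter (· < x)).card)

/-- A set `S` of `k`-faces is down-connected if any two of its members are
joined by a chain of faces in `S` with consecutive faces intersecting in
`(k-1)`-faces. -/
def DownConnected {α : Type*} [DecidableEq α] (k : ℕ) (S : Finset (Finset α)) : Prop :=
  ∀ σ ∈ S, ∀ σ' ∈ S,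
    Relation.ReflTransGen (fun a b => a ∈ S ∧ b ∈ S ∧ a ≠ b ∧ (a ∩ b).card = k) σ σ'

/-- Equality case of Cauchy–Schwarz. -/
lemma cs_eq_aux {ι : Type*} (s : Finset ι) (a c : ι → ℝ) (ha : ∀ i ∈ s, 0 < a i)
    (h : (∑ i ∈ s, a i * c i) ^ 2 = (∑ i ∈ s, a i ^ 2) * ∑ i ∈ s, c i ^ 2) :
    ∃ t : ℝ, ∀ i ∈ s, c i = t * a i := by
  rcases s.eq_empty_or_nonempty with rfl | hne
  · exact ⟨0, by simp⟩
  have hA2 : 0 < ∑ i ∈ s, a i ^ 2 :=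
    Finset.sum_pos (fun i hi => pow_pos (ha i hi) 2) hne
  set P := ∑ i ∈ s, a i * c i with hP
  set A2 := ∑ i ∈ s, a i ^ 2 with hA2def
  refine ⟨P / A2, fun i hi => ?_⟩
  have hz : ∑ j ∈ s, (c j - P / A2 * a j) ^ 2 = 0 := by
    have expand : ∑ j ∈ s, (c j - P / A2 * a j) ^ 2
        = (∑ j ∈ s, c j ^ 2) - 2 * (P / A2) * P + (P / A2) ^ 2 * A2 := by
      rw [Finset.sum_congr rfl (fun j _ => by ring :
        ∀ j ∈ s, (c j - P / A2 * a j) ^ 2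
          = c j ^ 2 - 2 * (P / A2) * (a j * c j) + (P / A2) ^ 2 * a j ^ 2)]
      rw [Finset.sum_add_distrib, Finset.sum_sub_distrib, ← Finset.mul_sum, ← Finset.mul_sum,
        ← hP, ← hA2def]
    rw [expand]
    have hQ : P ^ 2 = A2 * ∑ j ∈ s, c j ^ 2 := h
    field_simp
    nlinarith [hQ]
  have := (Finset.sum_eq_zero_iff_of_nonneg (fun j _ => sq_nonneg (c j - P / A2 * a j))).1 hz i hi
  have := pow_eq_zero_iff (n := 2) (by norm_num) |>.1 this
  linarith [sub_eq_zero.1 this]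

lemma sign_aux (u s t x : ℝ) (hu : u = 1 ∨ u = -1) (hs : 0 < s) (ht : t ≠ 0)
    (hx : x = t * (u * s)) :
    u * (if 0 < x then (1:ℝ) else -1) = if 0 < t then 1 else -1 := by
  rcases hu with rfl | rfl <;> rcases ht.lt_or_gt with h | h <;> subst hx
  · have h1 : t * (1 * s) < 0 := by nlinarith [mul_neg_of_neg_of_pos h hs]
    rw [if_neg h1.not_gt, if_neg h.not_gt]; norm_num
  · have h1 : 0 < t * (1 * s) := by nlinarith [mul_pos h hs]
    rw [if_pos h1, if_pos h]; norm_num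
  · have h1 : 0 < t * (-1 * s) := by nlinarith [mul_neg_of_neg_of_pos h hs]
    rw [if_pos h1, if_neg h.not_gt]; norm_num
  · have h1 : t * (-1 * s) < 0 := by nlinarith [mul_pos h hs]
    rw [if_neg h1.not_gt, if_pos h]; norm_num

/-- For the signed down-operator `A = A_k^{O(C_k),down}` of a down-connected
component `C` of `k`-faces (`k ≥ 1`, at least two faces) of a finite simplicial
complex, with entries built from the leaf-path function `LP`, the incidence
signs of a fixed orientation `ε₀`, and `RP = (k+1)!` on `k`-faces:
`λ_min(A) ≥ −1` (i.e. `A + I` is positive semidefinite); `−1` is an eigenvalue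
iff `C` admits a coherent orientation; and if the chosen orientation `ε₀` is
itself coherent then `g(σ) = (LP(σ)·RP(σ))^{1/2} = (LP(σ)·(k+1)!)^{1/2}` is an
eigenvector for `−1`, of multiplicity one. -/
theorem stmt16 {α : Type} [LinearOrder α] [Fintype α]
    (K : Finset (Finset α))
    (hKne : ∀ σ ∈ K, σ.Nonempty)
    (hKdc : ∀ σ ∈ K, ∀ τ, τ ⊆ σ → τ.Nonempty → τ ∈ K)
    (k : ℕ) (hk : 1 ≤ k)
    (LP : Finset α → ℕ)
    (hLPfacet : ∀ σ ∈ K, (∀ τ ∈ K, σ ⊆ τ → σ = τ) → LP σ = 1)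
    (hLPrec : ∀ σ ∈ K, ¬ (∀ τ ∈ K, σ ⊆ τ → σ = τ) →
      LP σ = ∑ τ ∈ K.filter (fun τ => σ ⊆ τ ∧ τ.card = σ.card + 1), LP τ)
    (C : Finset (Finset α))
    (hCK : ∀ σ ∈ C, σ ∈ K ∧ σ.card = k + 1)
    (hCconn : DownConnected k C)
    (hCmax : ∀ T : Finset (Finset α), C ⊆ T →
      (∀ σ ∈ T, σ ∈ K ∧ σ.card = k + 1) → DownConnected k T → T = C)
    (hCcard : 2 ≤ C.card)
    (ε0 : Finset α → ℤ)
    (hε0 : ∀ σ ∈ K, ε0 σ = 1 ∨ ε0 σ = -1)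
    (A : Matrix {σ // σ ∈ C} {σ // σ ∈ C} ℝ)
    (hAdiag : ∀ σ : {σ // σ ∈ C}, A σ σ =
      -(1 / (k + 1 : ℝ)) * (LP σ.1 : ℝ) *
        ∑ ρ ∈ K.filter (fun ρ => ρ ⊆ σ.1 ∧ ρ.card = k), ((LP ρ : ℝ))⁻¹)
    (hAadj : ∀ σ σ' : {σ // σ ∈ C}, σ.1 ≠ σ'.1 → (σ.1 ∩ σ'.1).card = k →
      A σ σ' = -(1 / (k + 1 : ℝ)) *
        ((ε0 σ.1 * IncSgn σ.1 (σ.1 ∩ σ'.1) * ε0 σ'.1 * IncSgn σ'.1 (σ.1 ∩ σ'.1) : ℤ) : ℝ) *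
        Real.sqrt (LP σ.1 : ℝ) * Real.sqrt (LP σ'.1 : ℝ) / (LP (σ.1 ∩ σ'.1) : ℝ))
    (hAzero : ∀ σ σ' : {σ // σ ∈ C}, σ.1 ≠ σ'.1 → (σ.1 ∩ σ'.1).card ≠ k → A σ σ' = 0) :
    (A + 1).PosSemidef ∧
    ((∃ f : {σ // σ ∈ C} → ℝ, f ≠ 0 ∧ A.mulVec f = -f) ↔
      (∃ ε : Finset α → ℤ, (∀ σ ∈ C, ε σ = 1 ∨ ε σ = -1) ∧
        ∀ σ ∈ C, ∀ σ' ∈ C, σ ≠ σ' → (σ ∩ σ').card = k →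
          ε σ * IncSgn σ (σ ∩ σ') = ε σ' * IncSgn σ' (σ ∩ σ'))) ∧
    ((∀ σ ∈ C, ∀ σ' ∈ C, σ ≠ σ' → (σ ∩ σ').card = k →
        ε0 σ * IncSgn σ (σ ∩ σ') = ε0 σ' * IncSgn σ' (σ ∩ σ')) →
      (A.mulVec (fun σ => Real.sqrt ((LP σ.1 * (k + 1).factorial : ℕ) : ℝ))
          = -(fun σ => Real.sqrt ((LP σ.1 * (k + 1).factorial : ℕ) : ℝ)) ∧
        ∀ f f' : {σ // σ ∈ C} → ℝ, A.mulVec f = -f → A.mulVec f' = -f' → f' ≠ 0 →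
          ∃ c : ℝ, f = c • f')) := by
  classical
  have hKmem : ∀ σ : {σ // σ ∈ C}, σ.1 ∈ K := fun σ => (hCK σ.1 σ.2).1
  have hKcard : ∀ σ : {σ // σ ∈ C}, σ.1.card = k + 1 := fun σ => (hCK σ.1 σ.2).2
  -- LP is positive on K
  have hLPpos : ∀ σ ∈ K, 0 < LP σ := by
    have main : ∀ n, ∀ σ ∈ K, Fintype.card α - σ.card ≤ n → 0 < LP σ := by
      intro n
      induction n with
      | zero =>
        intro σ hσ hle
        have hcu : σ.card = Fintype.card α := by
          have := Finset.card_le_univ σ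
          omega
        have hfac : ∀ τ ∈ K, σ ⊆ τ → σ = τ := by
          intro τ hτ hsub
          exact Finset.eq_of_subset_of_card_le hsub
            (by rw [hcu]; simpa [Finset.card_univ] using Finset.card_le_univ τ)
        rw [hLPfacet σ hσ hfac]; norm_num
      | succ n ih =>
        intro σ hσ hle
        by_cases hfac : ∀ τ ∈ K, σ ⊆ τ → σ = τ
        · rw [hLPfacet σ hσ hfac]; norm_num
        · rw [hLPrec σ hσ hfac]
          push_neg at hfac
          obtain ⟨τ, hτK, hsub, hne⟩ := hfac
          have hlt : σ.card < τ.card :=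
            Finset.card_lt_card (HasSubset.Subset.ssubset_of_ne hsub hne)
          obtain ⟨τ', h1, h2, h3⟩ := Finset.exists_subsuperset_card_eq hsub (n := σ.card + 1) (by omega) (by omega)
          have hτ'K : τ' ∈ K :=
            hKdc τ hτK τ' h2 ((hKne σ hσ).mono h1)
          have hτ'le : τ'.card ≤ Fintype.card α := by
            simpa [Finset.card_univ] using Finset.card_le_univ τ'
          refine Finset.sum_pos' (fun _ _ => Nat.zero_le _) ⟨τ', ?_, ?_⟩
          · rw [Finset.mem_filter]; exact ⟨hτ'K, h1, by omega⟩
          · exact ih τ' hτ'K (by omega)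
    exact fun σ hσ => main _ σ hσ le_rfl
  have hLPposR : ∀ σ ∈ K, (0:ℝ) < (LP σ : ℝ) := fun σ hσ => by
    exact_mod_cast Nat.cast_pos.2 (hLPpos σ hσ)
  have hsqpos : ∀ σ : {σ // σ ∈ C}, 0 < Real.sqrt (LP σ.1 : ℝ) :=
    fun σ => Real.sqrt_pos.2 (hLPposR _ (hKmem σ))
  have hsqsq : ∀ σ : {σ // σ ∈ C},
      Real.sqrt (LP σ.1 : ℝ) * Real.sqrt (LP σ.1 : ℝ) = (LP σ.1 : ℝ) :=
    fun σ => Real.mul_self_sqrt (le_of_lt (hLPposR _ (hKmem σ)))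
  -- the sign coefficients
  set e : Finset α → Finset α → ℝ := fun σ ρ => ((ε0 σ * IncSgn σ ρ : ℤ) : ℝ) with he_def
  have hInc : ∀ σ ρ : Finset α, IncSgn σ ρ = 1 ∨ IncSgn σ ρ = -1 :=
    fun σ ρ => neg_one_pow_eq_or ℤ _
  have he1 : ∀ σ ∈ K, ∀ ρ, e σ ρ = 1 ∨ e σ ρ = -1 := by
    intro σ hσ ρ
    rcases hε0 σ hσ with h1 | h1 <;> rcases hInc σ ρ with h2 | h2 <;>
      simp [he_def, h1, h2]
  have he2 : ∀ σ ∈ K, ∀ ρ, e σ ρ * e σ ρ = 1 := by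
    intro σ hσ ρ; rcases he1 σ hσ ρ with h | h <;> rw [h] <;> norm_num
  have heNe : ∀ σ ∈ K, ∀ ρ, e σ ρ ≠ 0 := by
    intro σ hσ ρ; rcases he1 σ hσ ρ with h | h <;> rw [h] <;> norm_num
  -- the set of relevant (k-1)-dimensional faces (cardinality k)
  set R : Finset (Finset α) := K.filter (fun ρ => ρ.card = k) with hR_def
  have hmemR : ∀ (σ : {σ // σ ∈ C}) (ρ : Finset α), ρ ⊆ σ.1 → ρ.card = k → ρ ∈ R := by
    intro σ ρ hsub hc
    rw [hR_def, Finset.mem_filter]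
    exact ⟨hKdc σ.1 (hKmem σ) ρ hsub (Finset.card_pos.1 (by omega)), hc⟩
  have hRK : ∀ ρ ∈ R, ρ ∈ K := fun ρ hρ => (Finset.mem_filter.1 hρ).1
  have hRcard : ∀ ρ ∈ R, ρ.card = k := fun ρ hρ => (Finset.mem_filter.1 hρ).2
  have hRfilter : ∀ σ : {σ // σ ∈ C},
      R.filter (fun ρ => ρ ⊆ σ.1) = K.filter (fun ρ => ρ ⊆ σ.1 ∧ ρ.card = k) := by
    intro σ; ext ρ
    simp only [hR_def, Finset.mem_filter, Finset.filter_filter]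
    tauto
  have hcardsub : ∀ σ : {σ // σ ∈ C}, (R.filter (fun ρ => ρ ⊆ σ.1)).card = k + 1 := by
    intro σ
    have hset : R.filter (fun ρ => ρ ⊆ σ.1) = σ.1.powersetCard k := by
      ext ρ
      simp only [hR_def, Finset.mem_filter, Finset.mem_powersetCard, Finset.filter_filter]
      constructor
      · rintro ⟨-, hc, hs⟩; exact ⟨hs, hc⟩
      · rintro ⟨hs, hc⟩
        exact ⟨hKdc σ.1 (hKmem σ) ρ hs (Finset.card_pos.1 (by omega)), hc, hs⟩
    rw [hset, Finset.card_powersetCard, hKcard σ, Nat.choose_succ_self_right]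
  -- intersection cardinality facts
  have hinterlt : ∀ σ σ' : {σ // σ ∈ C}, σ.1 ≠ σ'.1 → (σ.1 ∩ σ'.1).card ≤ k := by
    intro σ σ' hne
    by_contra h
    push_neg at h
    have h1 : σ.1.card ≤ (σ.1 ∩ σ'.1).card := by rw [hKcard σ]; omega
    have h2 := Finset.eq_of_subset_of_card_le Finset.inter_subset_left h1
    have h3 : σ.1 ⊆ σ'.1 := by rw [← h2]; exact Finset.inter_subset_right
    exact hne (Finset.eq_of_subset_of_card_le h3 (by rw [hKcard σ, hKcard σ']))
  -- C is closed under taking cofaces of common k-faces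
  have hclose : ∀ ρ : Finset α, ρ.card = k → ∀ σ0 ∈ C, ρ ⊆ σ0 →
      ∀ τ ∈ K, ρ ⊆ τ → τ.card = k + 1 → τ ∈ C := by
    intro ρ hρc σ0 hσ0 hρσ0 τ hτK hρτ hτc
    by_cases hτσ : τ = σ0
    · rw [hτσ]; exact hσ0
    have hadj : (τ ∩ σ0).card = k := by
      have h1 : ρ ⊆ τ ∩ σ0 := Finset.subset_inter hρτ hρσ0
      have h2 : k ≤ (τ ∩ σ0).card := hρc ▸ Finset.card_le_card h1
      have h3 : (τ ∩ σ0).card ≤ k + 1 := hτc ▸ Finset.card_le_card Finset.inter_subset_left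
      have h4 : (τ ∩ σ0).card ≠ k + 1 := by
        intro h
        have h5 := Finset.eq_of_subset_of_card_le
          (show τ ∩ σ0 ⊆ τ from Finset.inter_subset_left) (by omega)
        have h6 : τ ⊆ σ0 := by rw [← h5]; exact Finset.inter_subset_right
        exact hτσ (Finset.eq_of_subset_of_card_le h6
          (by rw [hτc, (hCK σ0 hσ0).2]))
      omega
    set r : Finset α → Finset α → Prop :=
      fun a b => a ∈ C ∧ b ∈ C ∧ a ≠ b ∧ (a ∩ b).card = k with hr_def
    set T : Finset (Finset α) := insert τ C with hT_def
    set rT : Finset α → Finset α → Prop :=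
      fun a b => a ∈ T ∧ b ∈ T ∧ a ≠ b ∧ (a ∩ b).card = k with hrT_def
    have hlift : ∀ a b : Finset α, Relation.ReflTransGen r a b →
        Relation.ReflTransGen rT a b :=
      fun a b h => Relation.ReflTransGen.mono
        (fun x y (hxy : r x y) => (⟨Finset.mem_insert_of_mem hxy.1,
          Finset.mem_insert_of_mem hxy.2.1, hxy.2.2⟩ : rT x y)) a b h
    have hτT : τ ∈ T := Finset.mem_insert_self _ _
    have hστ : Relation.ReflTransGen rT τ σ0 :=
      Relation.ReflTransGen.single
        ⟨hτT, Finset.mem_insert_of_mem hσ0, hτσ, hadj⟩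
    have hτσ' : Relation.ReflTransGen rT σ0 τ :=
      Relation.ReflTransGen.single
        ⟨Finset.mem_insert_of_mem hσ0, hτT, Ne.symm hτσ, by rw [Finset.inter_comm]; exact hadj⟩
    have hTconn : DownConnected k T := by
      intro a ha b hb
      rcases Finset.mem_insert.1 ha with rfl | haC <;> rcases Finset.mem_insert.1 hb with rfl | hbC
      · exact Relation.ReflTransGen.refl
      · exact hστ.trans (hlift _ _ (hCconn σ0 hσ0 b hbC))
      · exact (hlift _ _ (hCconn a haC σ0 hσ0)).trans hτσ'
      · exact hlift _ _ (hCconn a haC b hbC)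
    have hTK : ∀ σ ∈ T, σ ∈ K ∧ σ.card = k + 1 := by
      intro σ hσ
      rcases Finset.mem_insert.1 hσ with rfl | hσC
      · exact ⟨hτK, hτc⟩
      · exact hCK σ hσC
    have := hCmax T (Finset.subset_insert _ _) hTK hTconn
    rw [← this]; exact hτT
  -- LP of a k-face with a coface in C is the sum of LP over its cofaces in C
  have hLPsum : ∀ ρ ∈ R, (∃ σ0 : {σ // σ ∈ C}, ρ ⊆ σ0.1) →
      (LP ρ : ℝ) = ∑ σ : {σ // σ ∈ C}, (if ρ ⊆ σ.1 then (LP σ.1 : ℝ) else 0) := by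
    intro ρ hρ hco
    obtain ⟨σ0, hσ0⟩ := hco
    have hρK := hRK ρ hρ
    have hρc := hRcard ρ hρ
    have hnotfac : ¬ (∀ τ ∈ K, ρ ⊆ τ → ρ = τ) := by
      intro h
      have h1 := h σ0.1 (hKmem σ0) hσ0
      have h2 := hKcard σ0
      rw [← h1] at h2
      omega
    have hfs : K.filter (fun τ => ρ ⊆ τ ∧ τ.card = ρ.card + 1) = C.filter (fun τ => ρ ⊆ τ) := by
      ext τ
      simp only [Finset.mem_filter]
      constructor
      · rintro ⟨hτK, hτs, hτc⟩
        exact ⟨hclose ρ hρc σ0.1 σ0.2 hσ0 τ hτK hτs (by omega), hτs⟩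
      · rintro ⟨hτC, hτs⟩
        exact ⟨(hCK τ hτC).1, hτs, by rw [(hCK τ hτC).2, hρc]⟩
    have hN : LP ρ = ∑ τ ∈ C.filter (fun τ => ρ ⊆ τ), LP τ := by
      rw [hLPrec ρ hρK hnotfac, hfs]
    calc (LP ρ : ℝ) = ∑ τ ∈ C.filter (fun τ => ρ ⊆ τ), (LP τ : ℝ) := by
          rw [hN]; push_cast; ring
      _ = ∑ τ ∈ C, (if ρ ⊆ τ then (LP τ : ℝ) else 0) := by rw [Finset.sum_filter]
      _ = ∑ σ : {σ // σ ∈ C}, (if ρ ⊆ σ.1 then (LP σ.1 : ℝ) else 0) := by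
          rw [Finset.univ_eq_attach, Finset.sum_attach C (fun τ => if ρ ⊆ τ then (LP τ : ℝ) else 0)]
  -- the auxiliary linear forms
  set S : Finset α → ({σ // σ ∈ C} → ℝ) → ℝ := fun ρ x =>
    ∑ σ : {σ // σ ∈ C}, (if ρ ⊆ σ.1 then e σ.1 ρ * Real.sqrt (LP σ.1 : ℝ) * x σ else 0)
    with hS_def
  -- entrywise formula for A
  have F6core : ∀ σ σ' : {σ // σ ∈ C}, A σ σ' = -(1/(k+1:ℝ)) *
      ∑ ρ ∈ R, (if ρ ⊆ σ.1 ∧ ρ ⊆ σ'.1 then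
        e σ.1 ρ * Real.sqrt (LP σ.1 : ℝ) * (e σ'.1 ρ * Real.sqrt (LP σ'.1 : ℝ)) / (LP ρ : ℝ)
        else 0) := by
    intro σ σ'
    by_cases heq : σ.1 = σ'.1
    · have hss : σ = σ' := Subtype.ext heq
      subst hss
      rw [hAdiag σ]
      have hsum : ∑ ρ ∈ R, (if ρ ⊆ σ.1 ∧ ρ ⊆ σ.1 then
          e σ.1 ρ * Real.sqrt (LP σ.1 : ℝ) * (e σ.1 ρ * Real.sqrt (LP σ.1 : ℝ)) / (LP ρ : ℝ)
          else 0) = (LP σ.1 : ℝ) * ∑ ρ ∈ K.filter (fun ρ => ρ ⊆ σ.1 ∧ ρ.card = k),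
            ((LP ρ : ℝ))⁻¹ := by
        simp only [and_self]
        rw [← Finset.sum_filter, hRfilter σ, Finset.mul_sum]
        refine Finset.sum_congr rfl fun ρ hρ => ?_
        have h1 : e σ.1 ρ * Real.sqrt (LP σ.1 : ℝ) * (e σ.1 ρ * Real.sqrt (LP σ.1 : ℝ))
            = (LP σ.1 : ℝ) := by
          have := he2 σ.1 (hKmem σ) ρ
          have := hsqsq σ
          nlinarith [this]
        rw [h1]
        rw [div_eq_mul_inv]
      rw [hsum]
      ring
    · by_cases hcard : (σ.1 ∩ σ'.1).card = k
      · rw [hAadj σ σ' heq hcard]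
        have hmem : σ.1 ∩ σ'.1 ∈ R := hmemR σ _ Finset.inter_subset_left hcard
        rw [Finset.sum_eq_single_of_mem (σ.1 ∩ σ'.1) hmem ?side]
        · rw [if_pos ⟨Finset.inter_subset_left, Finset.inter_subset_right⟩]
          rw [he_def]
          push_cast
          ring
        case side =>
          intro ρ hρ hρne
          rw [if_neg]
          rintro ⟨h1, h2⟩
          exact hρne (Finset.eq_of_subset_of_card_le (Finset.subset_inter h1 h2)
            (by rw [hcard, hRcard ρ hρ]))
      · rw [hAzero σ σ' heq hcard]
        symm
        rw [mul_eq_zero]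
        right
        refine Finset.sum_eq_zero fun ρ hρ => ?_
        rw [if_neg]
        rintro ⟨h1, h2⟩
        have h3 : ρ ⊆ σ.1 ∩ σ'.1 := Finset.subset_inter h1 h2
        have h4 := Finset.card_le_card h3
        have h5 := hinterlt σ σ' heq
        have h6 := hRcard ρ hρ
        omega
  -- the quadratic/bilinear form identity
  have F6 : ∀ x y : {σ // σ ∈ C} → ℝ, x ⬝ᵥ A.mulVec y
      = -(1/(k+1:ℝ)) * ∑ ρ ∈ R, S ρ x * S ρ y / (LP ρ : ℝ) := by
    intro x y
    have L : x ⬝ᵥ A.mulVec y = ∑ σ : {σ // σ ∈ C}, ∑ σ' : {σ // σ ∈ C},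
        x σ * A σ σ' * y σ' := by
      simp only [dotProduct, Matrix.mulVec]
      refine Finset.sum_congr rfl fun σ _ => ?_
      rw [Finset.mul_sum]
      exact Finset.sum_congr rfl fun σ' _ => by ring
    rw [L]
    have Rr : -(1/(k+1:ℝ)) * ∑ ρ ∈ R, S ρ x * S ρ y / (LP ρ : ℝ)
        = ∑ σ : {σ // σ ∈ C}, ∑ σ' : {σ // σ ∈ C}, x σ *
            (-(1/(k+1:ℝ)) * ∑ ρ ∈ R, (if ρ ⊆ σ.1 ∧ ρ ⊆ σ'.1 then
              e σ.1 ρ * Real.sqrt (LP σ.1 : ℝ) * (e σ'.1 ρ * Real.sqrt (LP σ'.1 : ℝ))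
                / (LP ρ : ℝ) else 0)) * y σ' := by
      rw [Finset.mul_sum]
      have step1 : ∀ ρ ∈ R, -(1/(k+1:ℝ)) * (S ρ x * S ρ y / (LP ρ : ℝ))
          = ∑ σ : {σ // σ ∈ C}, ∑ σ' : {σ // σ ∈ C},
              x σ * (-(1/(k+1:ℝ)) * (if ρ ⊆ σ.1 ∧ ρ ⊆ σ'.1 then
                e σ.1 ρ * Real.sqrt (LP σ.1 : ℝ) * (e σ'.1 ρ * Real.sqrt (LP σ'.1 : ℝ))
                  / (LP ρ : ℝ) else 0)) * y σ' := by
        intro ρ hρ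
        rw [hS_def]
        rw [Finset.sum_mul_sum]
        rw [Finset.sum_div, Finset.mul_sum]
        refine Finset.sum_congr rfl fun σ _ => ?_
        rw [Finset.sum_div, Finset.mul_sum]
        refine Finset.sum_congr rfl fun σ' _ => ?_
        by_cases h1 : ρ ⊆ σ.1 <;> by_cases h2 : ρ ⊆ σ'.1 <;>
          simp only [h1, h2, if_true, if_false, and_true, and_false, true_and, false_and,
            if_pos, ite_true, ite_false] <;> ring
      rw [Finset.sum_congr rfl step1]
      rw [Finset.sum_comm]
      refine Finset.sum_congr rfl fun σ _ => ?_
      rw [Finset.sum_comm]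
      refine Finset.sum_congr rfl fun σ' _ => ?_
      symm
      simp only [Finset.mul_sum, Finset.sum_mul]
    rw [Rr]
    refine Finset.sum_congr rfl fun σ _ => Finset.sum_congr rfl fun σ' _ => ?_
    rw [F6core σ σ']
  -- the local ℓ² masses
  set b : Finset α → ({σ // σ ∈ C} → ℝ) → ℝ := fun ρ x =>
    ∑ σ : {σ // σ ∈ C}, (if ρ ⊆ σ.1 then x σ ^ 2 else 0) with hb_def
  have hbite : ∀ (x : {σ // σ ∈ C} → ℝ) ρ, b ρ x
      = ∑ σ ∈ Finset.univ.filter (fun σ : {σ // σ ∈ C} => ρ ⊆ σ.1), x σ ^ 2 := by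
    intro x ρ
    rw [hb_def, Finset.sum_filter]
  have hCS : ∀ (x : {σ // σ ∈ C} → ℝ), ∀ ρ ∈ R, S ρ x ^ 2 ≤ (LP ρ : ℝ) * b ρ x := by
    intro x ρ hρ
    by_cases hco : ∃ σ0 : {σ // σ ∈ C}, ρ ⊆ σ0.1
    · set t := Finset.univ.filter (fun σ : {σ // σ ∈ C} => ρ ⊆ σ.1) with ht_def
      have hSt : S ρ x = ∑ σ ∈ t, Real.sqrt (LP σ.1 : ℝ) * (e σ.1 ρ * x σ) := by
        rw [hS_def, ht_def, Finset.sum_filter]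
        exact Finset.sum_congr rfl fun σ _ => by split_ifs <;> ring
      have hcs := Finset.sum_mul_sq_le_sq_mul_sq t
        (fun σ => Real.sqrt (LP σ.1 : ℝ)) (fun σ => e σ.1 ρ * x σ)
      have ha2 : ∑ σ ∈ t, Real.sqrt (LP σ.1 : ℝ) ^ 2 = (LP ρ : ℝ) := by
        rw [hLPsum ρ hρ hco, ht_def, Finset.sum_filter]
        exact Finset.sum_congr rfl fun σ _ => by
          split_ifs <;> simp [Real.sq_sqrt (le_of_lt (hLPposR _ (hKmem σ)))]
      have hc2 : ∑ σ ∈ t, (e σ.1 ρ * x σ) ^ 2 = b ρ x := by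
        rw [hbite x ρ, ht_def]
        refine Finset.sum_congr rfl fun σ hσ => ?_
        rw [mul_pow]
        have : e σ.1 ρ ^ 2 = 1 := by rw [sq]; exact he2 σ.1 (hKmem σ) ρ
        rw [this, one_mul]
      calc S ρ x ^ 2 = (∑ σ ∈ t, Real.sqrt (LP σ.1 : ℝ) * (e σ.1 ρ * x σ)) ^ 2 := by rw [hSt]
        _ ≤ (∑ σ ∈ t, Real.sqrt (LP σ.1 : ℝ) ^ 2) * ∑ σ ∈ t, (e σ.1 ρ * x σ) ^ 2 := hcs
        _ = (LP ρ : ℝ) * b ρ x := by rw [ha2, hc2]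
    · have hS0 : S ρ x = 0 := by
        rw [hS_def]
        exact Finset.sum_eq_zero fun σ _ => if_neg (fun h => hco ⟨σ, h⟩)
      have hb0 : b ρ x = 0 := by
        rw [hb_def]
        exact Finset.sum_eq_zero fun σ _ => if_neg (fun h => hco ⟨σ, h⟩)
      rw [hS0, hb0]
      simp
  have hbsum : ∀ x : {σ // σ ∈ C} → ℝ,
      ∑ ρ ∈ R, b ρ x = (k+1:ℝ) * ∑ σ : {σ // σ ∈ C}, x σ ^ 2 := by
    intro x
    rw [hb_def]
    rw [Finset.sum_comm]
    rw [Finset.mul_sum]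
    refine Finset.sum_congr rfl fun σ _ => ?_
    rw [← Finset.sum_filter, Finset.sum_const, hcardsub σ]
    rw [nsmul_eq_mul]
    push_cast
    ring
  have hk1pos : (0:ℝ) < 1/(k+1:ℝ) := by positivity
  have hbound : ∀ x : {σ // σ ∈ C} → ℝ, -(x ⬝ᵥ A.mulVec x) ≤ x ⬝ᵥ x := by
    intro x
    rw [F6 x x]
    have h1 : ∀ ρ ∈ R, S ρ x * S ρ x / (LP ρ : ℝ) ≤ b ρ x := by
      intro ρ hρ
      have hp := hLPposR ρ (hRK ρ hρ)
      rw [div_le_iff₀ hp]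
      nlinarith [hCS x ρ hρ]
    have hdot : x ⬝ᵥ x = ∑ σ : {σ // σ ∈ C}, x σ ^ 2 := by
      simp [dotProduct, sq]
    calc -(-(1/(k+1:ℝ)) * ∑ ρ ∈ R, S ρ x * S ρ x / (LP ρ : ℝ))
        = (1/(k+1:ℝ)) * ∑ ρ ∈ R, S ρ x * S ρ x / (LP ρ : ℝ) := by ring
      _ ≤ (1/(k+1:ℝ)) * ∑ ρ ∈ R, b ρ x :=
          mul_le_mul_of_nonneg_left (Finset.sum_le_sum h1) (le_of_lt hk1pos)
      _ = (1/(k+1:ℝ)) * ((k+1:ℝ) * ∑ σ : {σ // σ ∈ C}, x σ ^ 2) := by rw [hbsum]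
      _ = ∑ σ : {σ // σ ∈ C}, x σ ^ 2 := by
          field_simp
      _ = x ⬝ᵥ x := hdot.symm
  -- equality case: eigenvectors for -1 are locally proportional to sqrt LP
  have key : ∀ f : {σ // σ ∈ C} → ℝ, A.mulVec f = -f → ∀ ρ ∈ R,
      ∃ t : ℝ, ∀ σ : {σ // σ ∈ C}, ρ ⊆ σ.1 →
        f σ = t * (e σ.1 ρ * Real.sqrt (LP σ.1 : ℝ)) := by
    intro f hf
    have hdot : f ⬝ᵥ f = ∑ σ : {σ // σ ∈ C}, f σ ^ 2 := by simp [dotProduct, sq]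
    have hSS : ∑ ρ ∈ R, S ρ f * S ρ f / (LP ρ : ℝ)
        = (k+1:ℝ) * ∑ σ : {σ // σ ∈ C}, f σ ^ 2 := by
      have h1 := F6 f f
      rw [hf, dotProduct_neg, hdot] at h1
      have hk' : (k+1:ℝ) ≠ 0 := by positivity
      field_simp at h1
      simp only [Finset.univ_eq_attach, ← sq] at h1 ⊢
      linarith
    have hnn : ∀ ρ ∈ R, 0 ≤ b ρ f - S ρ f * S ρ f / (LP ρ : ℝ) := by
      intro ρ hρ
      have hp := hLPposR ρ (hRK ρ hρ)
      have h2 := hCS f ρ hρ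
      rw [sub_nonneg, div_le_iff₀ hp]
      nlinarith
    have hglob : ∑ ρ ∈ R, (b ρ f - S ρ f * S ρ f / (LP ρ : ℝ)) = 0 := by
      rw [Finset.sum_sub_distrib, hbsum f, hSS]
      ring
    have heach := (Finset.sum_eq_zero_iff_of_nonneg hnn).1 hglob
    intro ρ hρ
    by_cases hco : ∃ σ0 : {σ // σ ∈ C}, ρ ⊆ σ0.1
    · set t := Finset.univ.filter (fun σ : {σ // σ ∈ C} => ρ ⊆ σ.1) with ht_def
      have hSt : S ρ f = ∑ σ ∈ t, Real.sqrt (LP σ.1 : ℝ) * (e σ.1 ρ * f σ) := by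
        rw [hS_def, ht_def, Finset.sum_filter]
        exact Finset.sum_congr rfl fun σ _ => by split_ifs <;> ring
      have ha2 : ∑ σ ∈ t, Real.sqrt (LP σ.1 : ℝ) ^ 2 = (LP ρ : ℝ) := by
        rw [hLPsum ρ hρ hco, ht_def, Finset.sum_filter]
        exact Finset.sum_congr rfl fun σ _ => by
          split_ifs <;> simp [Real.sq_sqrt (le_of_lt (hLPposR _ (hKmem σ)))]
      have hc2 : ∑ σ ∈ t, (e σ.1 ρ * f σ) ^ 2 = b ρ f := by
        rw [hbite f ρ, ht_def]
        refine Finset.sum_congr rfl fun σ hσ => ?_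
        rw [mul_pow]
        have : e σ.1 ρ ^ 2 = 1 := by rw [sq]; exact he2 σ.1 (hKmem σ) ρ
        rw [this, one_mul]
      have hp := hLPposR ρ (hRK ρ hρ)
      have heqρ : (∑ σ ∈ t, Real.sqrt (LP σ.1 : ℝ) * (e σ.1 ρ * f σ)) ^ 2
          = (∑ σ ∈ t, Real.sqrt (LP σ.1 : ℝ) ^ 2) * ∑ σ ∈ t, (e σ.1 ρ * f σ) ^ 2 := by
        rw [← hSt, ha2, hc2]
        have h3 := heach ρ hρ
        have h4 : b ρ f = S ρ f * S ρ f / (LP ρ : ℝ) := by linarith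
        rw [h4]
        field_simp
      obtain ⟨t0, ht0⟩ := cs_eq_aux t (fun σ => Real.sqrt (LP σ.1 : ℝ))
        (fun σ => e σ.1 ρ * f σ) (fun σ _ => hsqpos σ) heqρ
      refine ⟨t0, fun σ hσ => ?_⟩
      have hmem : σ ∈ t := by rw [ht_def]; exact Finset.mem_filter.2 ⟨Finset.mem_univ _, hσ⟩
      have h5 := ht0 σ hmem
      have h6 : f σ = e σ.1 ρ * (e σ.1 ρ * f σ) := by
        rw [← mul_assoc, he2 σ.1 (hKmem σ) ρ, one_mul]
      rw [h6, h5]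
      ring
    · exact ⟨0, fun σ hσ => absurd ⟨σ, hσ⟩ hco⟩
  -- coherent orientations give eigenvectors
  have eigOf : ∀ ε : Finset α → ℤ,
      (∀ σ ∈ C, ∀ σ' ∈ C, σ ≠ σ' → (σ ∩ σ').card = k →
        ε σ * IncSgn σ (σ ∩ σ') = ε σ' * IncSgn σ' (σ ∩ σ')) →
      A.mulVec (fun σ => ((ε0 σ.1 * ε σ.1 : ℤ) : ℝ) * Real.sqrt (LP σ.1 : ℝ))
        = -(fun σ => ((ε0 σ.1 * ε σ.1 : ℤ) : ℝ) * Real.sqrt (LP σ.1 : ℝ)) := by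
    intro ε hεcoh
    set f : {σ // σ ∈ C} → ℝ :=
      fun σ => ((ε0 σ.1 * ε σ.1 : ℤ) : ℝ) * Real.sqrt (LP σ.1 : ℝ) with hf_def
    funext σ
    have hsingle : (A.mulVec f) σ = Pi.single σ (1:ℝ) ⬝ᵥ A.mulVec f := by
      rw [single_dotProduct, one_mul]
    have hSx : ∀ ρ, S ρ (Pi.single σ (1:ℝ))
        = (if ρ ⊆ σ.1 then e σ.1 ρ * Real.sqrt (LP σ.1 : ℝ) else 0) := by
      intro ρ
      rw [hS_def]
      dsimp only
      rw [Finset.sum_eq_single σ]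
      · by_cases h : ρ ⊆ σ.1 <;> simp [h]
      · intro τ _ hτ
        by_cases h : ρ ⊆ τ.1 <;> simp [h, Pi.single_eq_of_ne hτ]
      · intro h; exact absurd (Finset.mem_univ σ) h
    have hSf : ∀ ρ ∈ R, ρ ⊆ σ.1 →
        S ρ f = ((ε σ.1 * IncSgn σ.1 ρ : ℤ) : ℝ) * (LP ρ : ℝ) := by
      intro ρ hρ hρσ
      have hterm : ∀ τ : {σ // σ ∈ C},
          (if ρ ⊆ τ.1 then e τ.1 ρ * Real.sqrt (LP τ.1 : ℝ) * f τ else 0)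
          = ((ε σ.1 * IncSgn σ.1 ρ : ℤ) : ℝ) * (if ρ ⊆ τ.1 then (LP τ.1 : ℝ) else 0) := by
        intro τ
        by_cases h : ρ ⊆ τ.1
        · rw [if_pos h, if_pos h, hf_def]
          have hIncEq : ((ε τ.1 * IncSgn τ.1 ρ : ℤ) : ℝ)
              = ((ε σ.1 * IncSgn σ.1 ρ : ℤ) : ℝ) := by
            by_cases hτσ : τ.1 = σ.1
            · rw [hτσ]
            · have hint : σ.1 ∩ τ.1 = ρ := by
                symm
                apply Finset.eq_of_subset_of_card_le (Finset.subset_inter hρσ h)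
                have h1 := hinterlt σ τ (fun hh => hτσ hh.symm)
                have h2 := hRcard ρ hρ
                omega
              have h3 := hεcoh σ.1 σ.2 τ.1 τ.2 (fun hh => hτσ hh.symm) (by rw [hint]; exact hRcard ρ hρ)
              rw [hint] at h3
              exact_mod_cast h3.symm
          rw [← hIncEq, he_def]
          have hε0sq : ((ε0 τ.1 : ℤ) : ℝ) * ((ε0 τ.1 : ℤ) : ℝ) = 1 := by
            rcases hε0 τ.1 (hKmem τ) with h' | h' <;> rw [h'] <;> norm_num
          have hss := hsqsq τ
          push_cast
          push_cast at hε0sq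
          linear_combination ((IncSgn τ.1 ρ : ℝ) * (ε τ.1 : ℝ) * Real.sqrt (LP τ.1 : ℝ)
              * Real.sqrt (LP τ.1 : ℝ)) * hε0sq
            + ((IncSgn τ.1 ρ : ℝ) * (ε τ.1 : ℝ)) * hss
        · rw [if_neg h, if_neg h, mul_zero]
      rw [hS_def]
      dsimp only
      rw [Finset.sum_congr rfl (fun τ _ => hterm τ), ← Finset.mul_sum,
        ← hLPsum ρ hρ ⟨σ, hρσ⟩]
    have hstep : ∀ ρ ∈ R, S ρ (Pi.single σ (1:ℝ)) * S ρ f / (LP ρ : ℝ)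
        = (if ρ ⊆ σ.1 then ((ε0 σ.1 * ε σ.1 : ℤ) : ℝ) * Real.sqrt (LP σ.1 : ℝ) else 0) := by
      intro ρ hρ
      rw [hSx ρ]
      by_cases h : ρ ⊆ σ.1
      · rw [if_pos h, if_pos h, hSf ρ hρ h]
        have hLPne : (LP ρ : ℝ) ≠ 0 := ne_of_gt (hLPposR ρ (hRK ρ hρ))
        have hIncsq : ((IncSgn σ.1 ρ : ℤ) : ℝ) * ((IncSgn σ.1 ρ : ℤ) : ℝ) = 1 := by
          rcases hInc σ.1 ρ with h' | h' <;> rw [h'] <;> norm_num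
        rw [he_def]
        push_cast
        push_cast at hIncsq
        field_simp
        linear_combination ((ε0 σ.1 : ℝ) * (ε σ.1 : ℝ) * Real.sqrt (LP σ.1 : ℝ)) * hIncsq
      · rw [if_neg h, if_neg h, zero_mul, zero_div]
    have hfin : (A.mulVec f) σ = -(f σ) := by
      rw [hsingle, F6 (Pi.single σ (1:ℝ)) f]
      rw [Finset.sum_congr rfl hstep]
      rw [← Finset.sum_filter, Finset.sum_const, hcardsub σ, nsmul_eq_mul]
      have hkne : (k+1:ℝ) ≠ 0 := by positivity
      simp only [hf_def]
      push_cast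
      field_simp
    exact hfin
  -- propagation along down-connected paths
  have propagate : ∀ P : {σ // σ ∈ C} → Prop,
      (∀ b c : {σ // σ ∈ C}, b.1 ≠ c.1 → (b.1 ∩ c.1).card = k → P b → P c) →
      ∀ σ0 : {σ // σ ∈ C}, P σ0 → ∀ σ : {σ // σ ∈ C}, P σ := by
    intro P hstep σ0 h0 σ
    have h := hCconn σ0.1 σ0.2 σ.1 σ.2
    have aux : ∀ bb : Finset α,
        Relation.ReflTransGen (fun a b => a ∈ C ∧ b ∈ C ∧ a ≠ b ∧ (a ∩ b).card = k) σ0.1 bb →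
        ∀ hb : bb ∈ C, P ⟨bb, hb⟩ := by
      intro bb h
      induction h with
      | refl =>
        intro hb
        have hx : (⟨σ0.1, hb⟩ : {σ // σ ∈ C}) = σ0 := Subtype.ext rfl
        rw [hx]; exact h0
      | tail hab hbc ih =>
        intro hc
        obtain ⟨hbC, hcC, hne, hcard⟩ := hbc
        exact hstep ⟨_, hbC⟩ ⟨_, hc⟩ hne hcard (ih hbC)
    exact aux σ.1 h σ.2
  refine ⟨?_, ?_, ?_⟩
  · -- positive semidefiniteness of A + 1
    have hsym : ∀ σ σ' : {σ // σ ∈ C}, A σ' σ = A σ σ' := by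
      intro σ σ'
      by_cases heq : σ.1 = σ'.1
      · have : σ = σ' := Subtype.ext heq
        rw [this]
      · by_cases hcard : (σ.1 ∩ σ'.1).card = k
        · rw [hAadj σ σ' heq hcard,
            hAadj σ' σ (Ne.symm heq) (by rw [Finset.inter_comm]; exact hcard)]
          rw [Finset.inter_comm σ'.1 σ.1]
          push_cast
          ring
        · rw [hAzero σ σ' heq hcard,
            hAzero σ' σ (Ne.symm heq) (by rw [Finset.inter_comm]; exact hcard)]
    have hAH : A.IsHermitian := by
      ext σ σ'
      rw [Matrix.conjTranspose_apply]
      simp [hsym σ' σ]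
    refine Matrix.PosSemidef.of_dotProduct_mulVec_nonneg (hAH.add Matrix.isHermitian_one) fun x => ?_
    have hsx : star x = x := funext fun i => star_trivial _
    rw [hsx, Matrix.add_mulVec, Matrix.one_mulVec, dotProduct_add]
    linarith [hbound x]
  · constructor
    · -- eigenvector for -1 gives coherent orientation
      rintro ⟨f, hf0, hfeig⟩
      obtain ⟨σs, hσs⟩ : ∃ σ : {σ // σ ∈ C}, f σ ≠ 0 := by
        by_contra h
        push_neg at h
        exact hf0 (funext h)
      have hnz : ∀ σ : {σ // σ ∈ C}, f σ ≠ 0 := by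
        refine propagate (fun σ => f σ ≠ 0) ?_ σs hσs
        intro bb cc hne hcard hb
        have hρR : bb.1 ∩ cc.1 ∈ R := hmemR bb _ Finset.inter_subset_left hcard
        obtain ⟨t, ht⟩ := key f hfeig _ hρR
        have h1 := ht bb Finset.inter_subset_left
        have h2 := ht cc Finset.inter_subset_right
        have ht0 : t ≠ 0 := by
          intro h
          rw [h, zero_mul] at h1
          exact hb h1
        rw [h2]
        exact mul_ne_zero ht0
          (mul_ne_zero (heNe cc.1 (hKmem cc) _) (ne_of_gt (hsqpos cc)))
      refine ⟨fun τ => if h : τ ∈ C then ε0 τ * (if 0 < f ⟨τ, h⟩ then 1 else -1) else 1,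
        ?_, ?_⟩
      · intro τ hτ
        dsimp only
        rw [dif_pos hτ]
        rcases hε0 τ (hCK τ hτ).1 with h | h <;> rw [h] <;> split_ifs <;> norm_num
      · intro τ hτ τ' hτ' hne hcard
        dsimp only
        rw [dif_pos hτ, dif_pos hτ']
        have hρR : τ ∩ τ' ∈ R := hmemR ⟨τ, hτ⟩ _ Finset.inter_subset_left hcard
        obtain ⟨t, ht⟩ := key f hfeig _ hρR
        have h1 := ht ⟨τ, hτ⟩ Finset.inter_subset_left
        have h2 := ht ⟨τ', hτ'⟩ Finset.inter_subset_right
        have ht0 : t ≠ 0 := by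
          intro h
          exact hnz ⟨τ, hτ⟩ (by rw [h1, h, zero_mul])
        have e1 := sign_aux (e τ (τ ∩ τ')) (Real.sqrt (LP τ : ℝ)) t (f ⟨τ, hτ⟩)
          (he1 τ (hCK τ hτ).1 _) (hsqpos ⟨τ, hτ⟩) ht0 h1
        have e2 := sign_aux (e τ' (τ ∩ τ')) (Real.sqrt (LP τ' : ℝ)) t (f ⟨τ', hτ'⟩)
          (he1 τ' (hCK τ' hτ').1 _) (hsqpos ⟨τ', hτ'⟩) ht0 h2
        have hiteC : ∀ (p : Prop) [Decidable p],
            (((if p then (1:ℤ) else -1) : ℤ) : ℝ) = if p then (1:ℝ) else -1 := by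
          intro p _
          split_ifs <;> norm_num
        have hgoalR : ((ε0 τ * (if 0 < f ⟨τ, hτ⟩ then (1:ℤ) else -1)
              * IncSgn τ (τ ∩ τ') : ℤ) : ℝ)
            = ((ε0 τ' * (if 0 < f ⟨τ', hτ'⟩ then (1:ℤ) else -1)
              * IncSgn τ' (τ ∩ τ') : ℤ) : ℝ) := by
          push_cast [hiteC]
          calc (ε0 τ : ℝ) * (if 0 < f ⟨τ, hτ⟩ then (1:ℝ) else -1) * (IncSgn τ (τ ∩ τ') : ℝ)
              = e τ (τ ∩ τ') * (if 0 < f ⟨τ, hτ⟩ then (1:ℝ) else -1) := by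
                rw [he_def]; push_cast; ring
            _ = (if 0 < t then (1:ℝ) else -1) := e1
            _ = e τ' (τ ∩ τ') * (if 0 < f ⟨τ', hτ'⟩ then (1:ℝ) else -1) := e2.symm
            _ = (ε0 τ' : ℝ) * (if 0 < f ⟨τ', hτ'⟩ then (1:ℝ) else -1)
                  * (IncSgn τ' (τ ∩ τ') : ℝ) := by
                rw [he_def]; push_cast; ring
        exact_mod_cast hgoalR
    · -- coherent orientation gives eigenvector
      rintro ⟨ε, hεv, hεcoh⟩
      refine ⟨fun σ => ((ε0 σ.1 * ε σ.1 : ℤ) : ℝ) * Real.sqrt (LP σ.1 : ℝ), ?_, eigOf ε hεcoh⟩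
      obtain ⟨τ0, hτ0⟩ : C.Nonempty := Finset.card_pos.1 (by omega)
      intro h
      have hval := congrFun h ⟨τ0, hτ0⟩
      have h1 : ((ε0 τ0 * ε τ0 : ℤ) : ℝ) ≠ 0 := by
        rcases hε0 τ0 (hCK τ0 hτ0).1 with a | a <;> rcases hεv τ0 hτ0 with bb | bb <;>
          rw [show ((ε0 τ0 * ε τ0 : ℤ) : ℝ) = (ε0 τ0 : ℝ) * (ε τ0 : ℝ) by push_cast; ring,
            a, bb] <;> norm_num
      have h2 := ne_of_gt (hsqpos ⟨τ0, hτ0⟩)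
      exact (mul_ne_zero h1 h2) hval
  · intro hcoh0
    constructor
    · -- explicit eigenvector
      have heig := eigOf ε0 hcoh0
      have hg : (fun σ : {σ // σ ∈ C} => Real.sqrt ((LP σ.1 * (k+1).factorial : ℕ) : ℝ))
          = Real.sqrt ((k+1).factorial : ℝ) •
            (fun σ : {σ // σ ∈ C} => ((ε0 σ.1 * ε0 σ.1 : ℤ) : ℝ) * Real.sqrt (LP σ.1 : ℝ)) := by
        funext σ
        have h1 : ((ε0 σ.1 * ε0 σ.1 : ℤ) : ℝ) = 1 := by
          rcases hε0 σ.1 (hKmem σ) with a | a <;> rw [show ((ε0 σ.1 * ε0 σ.1 : ℤ) : ℝ)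
            = (ε0 σ.1 : ℝ) * (ε0 σ.1 : ℝ) by push_cast; ring, a] <;> norm_num
        rw [Pi.smul_apply, smul_eq_mul, h1, one_mul]
        push_cast
        rw [Real.sqrt_mul (Nat.cast_nonneg _)]
        ring
      rw [hg, Matrix.mulVec_smul, heig, smul_neg]
    · -- multiplicity one
      intro f f' hf hf' hf'0
      obtain ⟨σs, hσs⟩ : ∃ σ : {σ // σ ∈ C}, f' σ ≠ 0 := by
        by_contra h
        push_neg at h
        exact hf'0 (funext h)
      set c := f σs / f' σs with hc
      have main : ∀ σ : {σ // σ ∈ C}, f σ = c * f' σ ∧ f' σ ≠ 0 := by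
        refine propagate _ ?_ σs ⟨by rw [hc]; field_simp, hσs⟩
        rintro bb cc hne hcard ⟨hb1, hb2⟩
        have hρR : bb.1 ∩ cc.1 ∈ R := hmemR bb _ Finset.inter_subset_left hcard
        obtain ⟨t, ht⟩ := key f hf _ hρR
        obtain ⟨t', ht'⟩ := key f' hf' _ hρR
        have h1 := ht bb Finset.inter_subset_left
        have h2 := ht cc Finset.inter_subset_right
        have h1' := ht' bb Finset.inter_subset_left
        have h2' := ht' cc Finset.inter_subset_right
        have hEs : e bb.1 (bb.1 ∩ cc.1) * Real.sqrt (LP bb.1 : ℝ) ≠ 0 :=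
          mul_ne_zero (heNe bb.1 (hKmem bb) _) (ne_of_gt (hsqpos bb))
        have ht'0 : t' ≠ 0 := by
          intro h
          rw [h, zero_mul] at h1'
          exact hb2 h1'
        have htc : t = c * t' := by
          have hstep : t * (e bb.1 (bb.1 ∩ cc.1) * Real.sqrt (LP bb.1 : ℝ))
              = c * t' * (e bb.1 (bb.1 ∩ cc.1) * Real.sqrt (LP bb.1 : ℝ)) := by
            rw [← h1, mul_assoc, ← h1']
            exact hb1
          exact mul_right_cancel₀ hEs hstep
        constructor
        · rw [h2, h2', htc]; ring
        · rw [h2']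
          exact mul_ne_zero ht'0
            (mul_ne_zero (heNe cc.1 (hKmem cc) _) (ne_of_gt (hsqpos cc)))
      exact ⟨c, funext fun σ => by
        rw [(main σ).1, Pi.smul_apply, smul_eq_mul]⟩
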